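/- Let κ be a regular uncountable cardinal and λ ≥ κ a cardinal. If there exists a κ-complete fine ultrafilter on P_κ(λ), then there exists a κ-complete nonprincipal normal ultrafilter on κ; in particular, κ is a measurable cardinal carrying a normal measure. -/

import Mathlib

open Cardinal

/-- `Pk κ α` is `P_κ(α)`: the collection of subsets of `α` of cardinality less than `κ`. -/
def Pk (κ : Cardinal) (α : Type) : Type := {s : Set α // #s < κ}

/-- Let `κ` be regular uncountable and `λ ≥ κ`. If there is a
`κ`-complete fine ultrafilter on `P_κ(λ)`, then there is a `κ`-complete nonprincipal
normal ultrafilter on `κ` (identified with the type `κ.ord.ToType` of ordinals below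
`κ`); in particular `κ` is a measurable cardinal carrying a normal measure. -/
theorem stmt_10 (κ lam : Cardinal) (hreg : κ.IsRegular) (hκ : ℵ₀ < κ) (hkl : κ ≤ lam)
    (U : Ultrafilter (Pk κ lam.ord.ToType))
    (hcomp : ∀ {ι : Type} (s : ι → Set (Pk κ lam.ord.ToType)), #ι < κ →
      (∀ i, s i ∈ U) → (⋂ i, s i) ∈ U)
    (hfine : ∀ a : lam.ord.ToType, {s : Pk κ lam.ord.ToType | a ∈ s.1} ∈ U) :
    ∃ D : Ultrafilter κ.ord.ToType,
      (∀ {ι : Type} (s : ι → Set κ.ord.ToType), #ι < κ →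
        (∀ i, s i ∈ D) → (⋂ i, s i) ∈ D) ∧
      (∀ x : κ.ord.ToType, ({x} : Set κ.ord.ToType) ∉ D) ∧
      (∀ h : κ.ord.ToType → κ.ord.ToType,
        (∀ α : κ.ord.ToType, (∃ β, β < α) → h α < α) →
        ∃ X ∈ D, ∃ c, ∀ β ∈ X, h β = c) := by
  classical
  haveI : IsWellOrder κ.ord.ToType (· < ·) := isWellOrder_lt
  have hord : κ.ord ≤ lam.ord := Cardinal.ord_le_ord.2 hkl
  let e : κ.ord.ToType → lam.ord.ToType := Ordinal.initialSegToType hord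
  have he : Function.Injective e := (Ordinal.initialSegToType hord).injective
  have hcof : κ.ord.cof = κ := hreg.cof_eq
  let E := Ordinal.ToType.mk (o := κ.ord)
  -- the projection π : P_κ(λ) → κ.ord.ToType
  have hTlt : ∀ s : Pk κ lam.ord.ToType, #{a : κ.ord.ToType | e a ∈ s.1} < κ := by
    intro s
    refine lt_of_le_of_lt (Cardinal.mk_le_of_injective
      (f := fun a : {a : κ.ord.ToType | e a ∈ s.1} => (⟨e a.1, a.2⟩ : s.1)) ?_) s.2
    intro a b hab
    exact Subtype.ext (he (congrArg Subtype.val hab))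
  have hlsub : ∀ s : Pk κ lam.ord.ToType,
      Ordinal.lsub.{0,0} (fun a : {a : κ.ord.ToType | e a ∈ s.1} =>
        Ordinal.typein (α := κ.ord.ToType) (· < ·) a.1) < κ.ord := by
    intro s
    apply Ordinal.lsub_lt_ord
    · rw [hcof]; exact hTlt s
    · intro i; exact Ordinal.typein_lt_self i.1
  let π : Pk κ lam.ord.ToType → κ.ord.ToType := fun s => E ⟨_, hlsub s⟩
  have hπ : ∀ (s : Pk κ lam.ord.ToType) (x : κ.ord.ToType), e x ∈ s.1 → x < π s := by
    intro s x hx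
    have h1 : Ordinal.typein (α := κ.ord.ToType) (· < ·) x <
        Ordinal.lsub.{0,0} (fun a : {a : κ.ord.ToType | e a ∈ s.1} =>
          Ordinal.typein (α := κ.ord.ToType) (· < ·) a.1) :=
      Ordinal.lt_lsub.{0,0} (fun a : {a : κ.ord.ToType | e a ∈ s.1} =>
          Ordinal.typein (α := κ.ord.ToType) (· < ·) a.1) ⟨x, hx⟩
    have h2 : E.symm x < E.symm (π s) := by
      show E.symm x < E.symm (E ⟨_, hlsub s⟩)
      rw [E.symm_apply_apply]
      exact Subtype.mk_lt_mk.2 h1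
    exact (E.symm.lt_iff_lt).1 h2
  -- the projected ultrafilter D₀ on κ.ord.ToType
  let D₀ : Ultrafilter κ.ord.ToType := Ultrafilter.map π U
  have hD₀mem : ∀ X : Set κ.ord.ToType, X ∈ D₀ ↔ π ⁻¹' X ∈ U := fun X => Ultrafilter.mem_map
  have hD₀comp : ∀ {ι' : Type} (s : ι' → Set κ.ord.ToType), #ι' < κ →
      (∀ i, s i ∈ D₀) → (⋂ i, s i) ∈ D₀ := by
    intro ι' s hs hmem
    rw [hD₀mem, Set.preimage_iInter]
    exact hcomp _ hs fun i => (hD₀mem _).1 (hmem i)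
  have hD₀sing : ∀ x : κ.ord.ToType, ({x} : Set κ.ord.ToType) ∉ D₀ := by
    intro x hx
    rw [hD₀mem] at hx
    have h2 := hfine (e x)
    have h3 : (π ⁻¹' {x}) ∩ {s : Pk κ lam.ord.ToType | e x ∈ s.1} ∈ U :=
      Filter.inter_mem hx h2
    rcases Filter.nonempty_of_mem h3 with ⟨s, hs1, hs2⟩
    have := hπ s x hs2
    rw [Set.mem_preimage, Set.mem_singleton_iff] at hs1
    rw [hs1] at this
    exact lt_irrefl _ this
  -- well-foundedness of the relation `g < f mod D₀`
  let r : (κ.ord.ToType → κ.ord.ToType) → (κ.ord.ToType → κ.ord.ToType) → Prop := fun g f => {α | g α < f α} ∈ D₀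
  haveI hirr : IsIrrefl (κ.ord.ToType → κ.ord.ToType) r := by
    constructor
    intro g hg
    have hg2 : {α : κ.ord.ToType | g α < g α} ∈ D₀ := hg
    have hem : {α : κ.ord.ToType | g α < g α} = ∅ := by ext a; simp
    rw [hem] at hg2
    exact Ultrafilter.empty_notMem hg2
  haveI htr : IsTrans (κ.ord.ToType → κ.ord.ToType) r := by
    constructor
    intro a b c hab hbc
    refine Filter.mem_of_superset (Filter.inter_mem hab hbc) ?_
    rintro α ⟨h1, h2⟩
    simp only [Set.mem_setOf_eq] at h1 h2 ⊢
    exact lt_trans h1 h2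
  haveI : IsStrictOrder (κ.ord.ToType → κ.ord.ToType) r := ⟨⟩
  have hwf : WellFounded r := by
    rw [RelEmbedding.wellFounded_iff_isEmpty]
    constructor
    intro emb
    have hstep : ∀ n : ℕ, {α | emb (n + 1) α < emb n α} ∈ D₀ := by
      intro n
      exact emb.map_rel_iff.2 (Nat.lt_succ_self n)
    have hint : (⋂ n : ℕ, {α | emb (n + 1) α < emb n α}) ∈ D₀ := by
      apply hD₀comp _ _ hstep
      rw [Cardinal.mk_nat]; exact hκ
    rcases Filter.nonempty_of_mem hint with ⟨α, hα⟩
    simp only [Set.mem_iInter, Set.mem_setOf_eq] at hα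
    have hdec : ∀ n : ℕ, emb (n + 1) α < emb n α := hα
    obtain ⟨x, ⟨n, rfl⟩, hmin⟩ := (wellFounded_lt (α := κ.ord.ToType)).has_min
      (Set.range fun n => emb n α) ⟨_, ⟨0, rfl⟩⟩
    exact hmin _ ⟨n + 1, rfl⟩ (hdec n)
  -- the set of functions not constant mod D₀, and a minimal such function
  let S : Set (κ.ord.ToType → κ.ord.ToType) := {f | ∀ c : κ.ord.ToType, {α | f α = c} ∉ D₀}
  have hidS : id ∈ S := by
    intro c hc
    have : {α : κ.ord.ToType | id α = c} = {c} := by ext a; simp [Set.mem_singleton_iff]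
    rw [this] at hc
    exact hD₀sing c hc
  have hSne : S.Nonempty := ⟨id, hidS⟩
  let f : κ.ord.ToType → κ.ord.ToType := hwf.min S hSne
  have hfS : f ∈ S := hwf.min_mem S hSne
  have hfmin : ∀ g ∈ S, ¬ r g f := fun g hg => hwf.not_lt_min S hg
  -- the normal ultrafilter D
  refine ⟨Ultrafilter.map f D₀, ?_, ?_, ?_⟩
  · intro ι' s hs hmem
    rw [Ultrafilter.mem_map, Set.preimage_iInter]
    exact hD₀comp _ hs fun i => Ultrafilter.mem_map.1 (hmem i)
  · intro x hx
    rw [Ultrafilter.mem_map] at hx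
    exact hfS x hx
  · intro h hh
    -- κ.ord.ToType is nonempty with a least element m
    have hne : Nonempty κ.ord.ToType := by
      rw [Ordinal.toType_nonempty_iff_ne_zero, Ne, Cardinal.ord_eq_zero]
      intro h0
      rw [h0] at hκ
      exact (Cardinal.aleph0_pos.trans hκ).ne' rfl
    obtain ⟨m⟩ := hne
    obtain ⟨m, -, hm⟩ := (wellFounded_lt (α := κ.ord.ToType)).has_min Set.univ ⟨m, trivial⟩
    have hmle : ∀ x : κ.ord.ToType, m ≤ x := fun x => not_lt.1 fun hx => hm x trivial hx
    -- h ∘ f is below f mod D₀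
    have hrg : r (h ∘ f) f := by
      have h1 : {α : κ.ord.ToType | f α ≠ m} ∈ D₀ :=
        (Ultrafilter.compl_mem_iff_notMem).2 (by exact hfS m)
      refine Filter.mem_of_superset h1 ?_
      intro α hα
      have : ∃ β, β < f α := ⟨m, lt_of_le_of_ne (hmle _) (Ne.symm hα)⟩
      exact hh (f α) this
    have hgnS : (h ∘ f) ∉ S := fun hgS => hfmin _ hgS hrg
    simp only [S, Set.mem_setOf_eq, not_forall, not_not] at hgnS
    obtain ⟨c, hc⟩ := hgnS
    refine ⟨{β | h β = c}, ?_, c, fun β hβ => hβ⟩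
    rw [Ultrafilter.mem_map]
    exact hc
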